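/- Let L/K be a finite Galois extension of fields with Galois group Γ = Gal(L/K), and let K′ be an intermediate field, K ⊆ K′ ⊆ L. Make Γ act on the commutative ring K′ ⊗_K L through the second tensor factor (σ acts as id ⊗ σ), and hence act by group automorphisms on the group of units (K′ ⊗_K L)ˣ. Then the first group cohomology group H¹(Γ, (K′ ⊗_K L)ˣ) is trivial. -/

import Mathlib

open TensorProduct

set_option synthInstance.maxHeartbeats 1000000
set_option maxHeartbeats 1000000

/-- The action of a group `G` on the units of a monoid `M`, induced by an action
of `G` on `M` by monoid automorphisms. -/
def unitsMulDistribMulAction (G M : Type) [Group G] [Monoid M]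
    [MulDistribMulAction G M] : MulDistribMulAction G Mˣ where
  smul g u := Units.map (MulDistribMulAction.toMonoidHom M g) u
  one_smul u := Units.ext (one_smul G (u : M))
  mul_smul g h u := Units.ext (mul_smul g h (u : M))
  smul_mul g u v := Units.ext (smul_mul' g (u : M) (v : M))
  smul_one g := Units.ext (smul_one g)

noncomputable def tensorUnitsCommGroup (K L : Type) [Field K] [Field L] [Algebra K L]
    (K' : IntermediateField K L) : CommGroup (K' ⊗[K] L)ˣ :=
  letI : CommMonoid (K' ⊗[K] L) := inferInstance
  inferInstance

set_option linter.unusedSectionVars false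

open Module

namespace Stmt0Aux

variable (K L : Type) [Field K] [Field L] [Algebra K L]
    [FiniteDimensional K L] [IsGalois K L] (K' : IntermediateField K L)


/-- The evaluation map `K' ⊗[K] L → ((K' →ₐ[K] L) → L)`. -/
noncomputable def π : (K' ⊗[K] L) →ₐ[K] ((K' →ₐ[K] L) → L) :=
  Algebra.TensorProduct.productMap (Pi.algHom K _ fun σ => σ)
    (Pi.algHom K _ fun _ => AlgHom.id K L)

@[simp] lemma π_tmul (a : K') (b : L) (σ : K' →ₐ[K] L) :
    π K L K' (a ⊗ₜ[K] b) σ = σ a * b := rfl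

/-- The range of `π`, as an `L`-submodule of the target. -/
noncomputable def S : Submodule L ((K' →ₐ[K] L) → L) where
  carrier := Set.range ⇑(π K L K')
  add_mem' := by rintro _ _ ⟨x, rfl⟩ ⟨y, rfl⟩; exact ⟨x + y, map_add _ _ _⟩
  zero_mem' := ⟨0, map_zero _⟩
  smul_mem' := by
    rintro c _ ⟨x, rfl⟩
    refine ⟨((1 : K') ⊗ₜ[K] c) * x, ?_⟩
    rw [map_mul]
    funext σ
    simp

lemma π_surjective : Function.Surjective (π K L K') := by
  classical
  intro v
  suffices h : S K L K' = ⊤ by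
    have : v ∈ S K L K' := h ▸ Submodule.mem_top
    exact this
  by_contra h
  obtain ⟨φ, hφ0, hφ⟩ := Submodule.exists_dual_map_eq_bot_of_lt_top
    (lt_top_iff_ne_top.2 h) inferInstance
  have hker : ∀ x : K' ⊗[K] L, φ (π K L K' x) = 0 := by
    intro x
    have : φ (π K L K' x) ∈ (S K L K').map φ := ⟨π K L K' x, ⟨x, rfl⟩, rfl⟩
    rw [hφ] at this
    exact (Submodule.mem_bot L).1 this
  set c : (K' →ₐ[K] L) → L := fun σ => φ (Pi.single σ 1) with hc
  have key1 : ∀ w : (K' →ₐ[K] L) → L, φ w = ∑ σ, w σ * c σ := by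
    intro w
    have hw : ∑ σ, w σ • (Pi.single σ 1 : (K' →ₐ[K] L) → L) = w :=
      (Finset.sum_congr rfl fun σ _ => by
        rw [← Pi.single_smul, smul_eq_mul, mul_one]).trans (Finset.univ_sum_single w)
    conv_lhs => rw [← hw]
    rw [map_sum]
    exact Finset.sum_congr rfl fun σ _ => by rw [map_smul, smul_eq_mul]
  have key2 : ∀ a : K', ∑ σ : K' →ₐ[K] L, c σ • σ a = 0 := by
    intro a
    have := hker (a ⊗ₜ[K] 1)
    rw [key1] at this
    simpa [mul_comm] using this
  have li : LinearIndependent L (fun σ : (K' →ₐ[K] L) => ((σ : K' →* L) : K' → L)) := by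
    have hinj : Function.Injective (fun σ : (K' →ₐ[K] L) => (σ : K' →* L)) :=
      fun σ τ h => AlgHom.ext fun a => DFunLike.congr_fun h a
    have := (linearIndependent_monoidHom K' L).comp _ hinj
    exact this
  have hc0 : ∀ σ, c σ = 0 := by
    have := Fintype.linearIndependent_iff.1 li c ?_
    · exact this
    · funext a
      simpa using key2 a
  apply hφ0
  apply LinearMap.ext
  intro w
  rw [key1]
  simp [hc0]

lemma card_algHom : Fintype.card (K' →ₐ[K] L) = finrank K K' := by
  haveI : Algebra.IsSeparable K K' :=
    Algebra.isSeparable_tower_bot_of_isSeparable K K' L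
  refine AlgHom.card_of_splits K K' L (fun x => ?_)
  have h1 : minpoly K ((x : L)) = minpoly K x :=
    minpoly.algebraMap_eq (algebraMap K' L).injective x
  rw [← h1]
  exact (IsGalois.to_normal (F := K) (E := L)).splits (x : L)

lemma π_bijective : Function.Bijective (π K L K') := by
  refine ⟨?_, π_surjective K L K'⟩
  have hrank : finrank K (K' ⊗[K] L) = finrank K ((K' →ₐ[K] L) → L) := by
    rw [Module.finrank_tensorProduct, Module.finrank_pi_fintype,
      Finset.sum_const, Finset.card_univ, card_algHom K L K', smul_eq_mul, mul_comm]
  exact (LinearMap.injective_iff_surjective_of_finrank_eq_finrank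
    (f := (π K L K').toLinearMap) hrank).2 (π_surjective K L K')

/-- `π` as an algebra isomorphism. -/
noncomputable def e : (K' ⊗[K] L) ≃ₐ[K] ((K' →ₐ[K] L) → L) :=
  AlgEquiv.ofBijective (π K L K') (π_bijective K L K')

lemma e_apply (x : K' ⊗[K] L) : e K L K' x = π K L K' x := rfl

variable [MulSemiringAction (L ≃ₐ[K] L) (K' ⊗[K] L)]

lemma π_smul (hact : ∀ (σ : L ≃ₐ[K] L) (a : K') (b : L),
      σ • ((a : K') ⊗ₜ[K] b) = (a : K') ⊗ₜ[K] (σ b))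
    (g : L ≃ₐ[K] L) (x : K' ⊗[K] L) (σ : K' →ₐ[K] L) :
    π K L K' (g • x) σ = g (π K L K' x ((g⁻¹ : L ≃ₐ[K] L).toAlgHom.comp σ)) := by
  have hring : ∀ y : K' ⊗[K] L,
      g • y = MulSemiringAction.toRingHom (L ≃ₐ[K] L) (K' ⊗[K] L) g y := fun _ => rfl
  induction x using TensorProduct.induction_on with
  | zero => rw [hring, map_zero, map_zero]; simp
  | tmul a b =>
      rw [hact g a b]
      simp only [π_tmul, AlgHom.coe_comp, AlgEquiv.toAlgHom_eq_coe, AlgHom.coe_coe,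
        Function.comp_apply, map_mul]
      have hinv : (g⁻¹ : L ≃ₐ[K] L) = g.symm := rfl
      rw [hinv]
      exact congrArg (· * g b) (g.apply_symm_apply (σ a)).symm
  | add x y hx hy =>
      rw [hring, map_add, map_add, Pi.add_apply, ← hring, ← hring, hx, hy, map_add,
        Pi.add_apply, map_add]

/-- A section of the restriction map `(L ≃ₐ[K] L) → (K' →ₐ[K] L)`. -/
noncomputable def sec (σ : K' →ₐ[K] L) : L ≃ₐ[K] L :=
  AlgEquiv.ofBijective (σ.liftNormal L) (AlgHom.normal_bijective K L L _)

lemma sec_spec (σ : K' →ₐ[K] L) (a : K') : sec K L K' σ (a : L) = σ a := by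
  have := AlgHom.liftNormal_commutes σ L a
  simpa [sec] using this

theorem exists_unit (hact : ∀ (σ : L ≃ₐ[K] L) (a : K') (b : L),
      σ • ((a : K') ⊗ₜ[K] b) = (a : K') ⊗ₜ[K] (σ b))
    (f : (L ≃ₐ[K] L) → (K' ⊗[K] L)ˣ)
    (hf : ∀ g h : L ≃ₐ[K] L, ((f (g * h) : K' ⊗[K] L)) =
      g • ((f h : K' ⊗[K] L)) * ((f g : K' ⊗[K] L))) :
    ∃ x : (K' ⊗[K] L)ˣ, ∀ g : L ≃ₐ[K] L,
      g • ((x : K' ⊗[K] L)) = ((f g : K' ⊗[K] L)) * ((x : K' ⊗[K] L)) := by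
  classical
  haveI : FiniteDimensional K' L := FiniteDimensional.right K K' L
  set F : (L ≃ₐ[K] L) → (K' →ₐ[K] L) → L :=
    fun g σ => π K L K' ((f g : K' ⊗[K] L)) σ with hFdef
  have hFne : ∀ g σ, F g σ ≠ 0 := by
    intro g σ
    have h1 : F g σ * π K L K' ((↑(f g)⁻¹ : K' ⊗[K] L)) σ = 1 := by
      rw [hFdef]
      dsimp only
      rw [← Pi.mul_apply, ← map_mul]
      rw [Units.mul_inv]
      exact congrFun (π K L K').map_one' σ
    exact left_ne_zero_of_mul_eq_one h1
  have hF : ∀ g h σ, F (g * h) σ =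
      g (F h ((g⁻¹ : L ≃ₐ[K] L).toAlgHom.comp σ)) * F g σ := by
    intro g h σ
    rw [hFdef]
    dsimp only
    rw [hf g h, map_mul, Pi.mul_apply, π_smul K L K' hact]
  -- the cocycle over the subgroup fixing `K'`
  set c : (L ≃ₐ[K'] L) → Lˣ :=
    fun d => Units.mk0 (F (AlgEquiv.restrictScalars K d) K'.val) (hFne _ _) with hcdef
  have hfix : ∀ d : L ≃ₐ[K'] L,
      ((AlgEquiv.restrictScalars K d)⁻¹ : L ≃ₐ[K] L).toAlgHom.comp K'.val = K'.val := by
    intro d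
    apply AlgHom.ext
    intro a
    show ((AlgEquiv.restrictScalars K d)⁻¹ : L ≃ₐ[K] L) (a : L) = (a : L)
    rw [show ((AlgEquiv.restrictScalars K d)⁻¹ : L ≃ₐ[K] L)
        = (AlgEquiv.restrictScalars K d).symm from rfl, AlgEquiv.symm_apply_eq]
    exact (d.commutes a).symm
  have hc : groupCohomology.IsMulCocycle₁ c := by
    intro g h
    apply Units.ext
    show F (AlgEquiv.restrictScalars K (g * h)) K'.val = ((g • c h) * c g : Lˣ)
    have hres : AlgEquiv.restrictScalars K (g * h)
        = AlgEquiv.restrictScalars K g * AlgEquiv.restrictScalars K h := rfl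
    rw [hres, hF, hfix g]
    rw [Units.val_mul, AlgEquiv.smul_units_def, Units.coe_map]
    rfl
  obtain ⟨β, hβ⟩ := groupCohomology.isMulCoboundary₁_of_isMulCocycle₁_of_aut_to_units c hc
  have hβ' : ∀ d : L ≃ₐ[K'] L,
      F (AlgEquiv.restrictScalars K d) K'.val = d (β : L) / (β : L) := by
    intro d
    have := congrArg Units.val (hβ d)
    rw [Units.val_div_eq_div_val, AlgEquiv.smul_units_def, Units.coe_map] at this
    exact this.symm
  -- the candidate coboundary
  set v : (K' →ₐ[K] L) → L :=
    fun σ => (F (sec K L K' σ) σ)⁻¹ * (sec K L K' σ) (β : L) with hvdef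
  have hsecβ : ∀ σ, (sec K L K' σ) (β : L) ≠ 0 := fun σ h =>
    Units.ne_zero β ((sec K L K' σ).injective (by rw [h, map_zero]))
  have vne : ∀ σ, v σ ≠ 0 := fun σ =>
    mul_ne_zero (inv_ne_zero (hFne _ _)) (hsecβ σ)
  have hmain : ∀ (g : L ≃ₐ[K] L) (σ : K' →ₐ[K] L),
      g (v ((g⁻¹ : L ≃ₐ[K] L).toAlgHom.comp σ)) = F g σ * v σ := by
    intro g σ
    set σ' : K' →ₐ[K] L := (g⁻¹ : L ≃ₐ[K] L).toAlgHom.comp σ with hσ'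
    set t : L ≃ₐ[K] L := sec K L K' σ with htdef
    set t' : L ≃ₐ[K] L := sec K L K' σ' with ht'def
    set δ : L ≃ₐ[K] L := t⁻¹ * (g * t') with hδdef
    have hδfix : ∀ a : K', δ ((a : K') : L) = ((a : K') : L) := by
      intro a
      rw [hδdef, AlgEquiv.mul_apply, AlgEquiv.mul_apply]
      have h1 : t' (a : L) = (g⁻¹ : L ≃ₐ[K] L) (σ a) := sec_spec K L K' σ' a
      rw [h1, show (g⁻¹ : L ≃ₐ[K] L) = g.symm from rfl, AlgEquiv.apply_symm_apply,
        show (t⁻¹ : L ≃ₐ[K] L) = t.symm from rfl, AlgEquiv.symm_apply_eq]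
      exact (sec_spec K L K' σ a).symm
    set δ' : L ≃ₐ[K'] L := { δ with commutes' := fun a => hδfix a } with hδ'def
    have hres : AlgEquiv.restrictScalars K δ' = δ := rfl
    have hv5 : F δ K'.val = δ (β : L) / (β : L) := by
      rw [← hres]; exact hβ' δ'
    have ht0 : (t⁻¹ : L ≃ₐ[K] L).toAlgHom.comp σ = K'.val := by
      apply AlgHom.ext
      intro a
      show (t⁻¹ : L ≃ₐ[K] L) (σ a) = (a : L)
      rw [show (t⁻¹ : L ≃ₐ[K] L) = t.symm from rfl, AlgEquiv.symm_apply_eq]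
      exact (sec_spec K L K' σ a).symm
    have htδ : t * δ = g * t' := by rw [hδdef]; group
    have hc2 : F (t * δ) σ = t (δ (β : L)) / t (β : L) * F t σ := by
      rw [hF t δ σ, ht0, hv5, map_div₀]
    have hc1 : F (g * t') σ = g (F t' σ') * F g σ := hF g t' σ
    have hgt' : g (t' (β : L)) = t (δ (β : L)) := by
      rw [← AlgEquiv.mul_apply, ← AlgEquiv.mul_apply, htδ]
    have h3 : g (F t' σ') * F g σ = t (δ (β : L)) / t (β : L) * F t σ := by
      rw [← hc1, ← htδ, hc2]
    have h4 : g (F t' σ') = t (δ (β : L)) / t (β : L) * F t σ / F g σ :=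
      eq_div_of_mul_eq (hFne g σ) h3
    have htβ : t (β : L) ≠ 0 := hsecβ σ
    have htδβ : t (δ (β : L)) ≠ 0 := fun h =>
      Units.ne_zero β (δ.injective (t.injective (by rw [h, map_zero, map_zero])))
    show g ((F t' σ')⁻¹ * t' (β : L)) = F g σ * ((F t σ)⁻¹ * t (β : L))
    rw [map_mul, map_inv₀, h4, hgt']
    field_simp
  -- assemble the unit
  set w : (K' →ₐ[K] L) → L := fun σ => (v σ)⁻¹ with hwdef
  have hvw : v * w = 1 := by
    funext σ
    exact mul_inv_cancel₀ (vne σ)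
  refine ⟨⟨(e K L K').symm v, (e K L K').symm w, ?_, ?_⟩, ?_⟩
  · rw [← map_mul, hvw, map_one]
  · rw [← map_mul, mul_comm w v, hvw, map_one]
  · intro g
    apply (e K L K').injective
    show e K L K' (g • ((e K L K').symm v)) = e K L K' (((f g) : K' ⊗[K] L) * (e K L K').symm v)
    have hπv : π K L K' ((e K L K').symm v) = v := (e K L K').apply_symm_apply v
    funext σ
    have h5 : π K L K' (g • ((e K L K').symm v)) σ = F g σ * v σ := by
      rw [π_smul K L K' hact g _ σ, hπv]
      exact hmain g σ
    have h6 : π K L K' (((f g : K' ⊗[K] L)) * (e K L K').symm v) σ = F g σ * v σ := by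
      rw [map_mul, Pi.mul_apply, hπv]
    rw [e_apply, e_apply, h5, h6]

end Stmt0Aux


/-- Let `L/K` be a finite Galois extension of fields with Galois group
`Γ = Gal(L/K)`, and let `K'` be an intermediate field, `K ⊆ K' ⊆ L`.  Make `Γ` act on
the commutative ring `K' ⊗[K] L` through the second tensor factor (`σ` acts as
`id ⊗ σ`), hence by group automorphisms on the group of units `(K' ⊗[K] L)ˣ`.
Then the first group cohomology group `H¹(Γ, (K' ⊗[K] L)ˣ)` is trivial. -/
theorem stmt0 (K L : Type) [Field K] [Field L] [Algebra K L]
    [FiniteDimensional K L] [IsGalois K L] (K' : IntermediateField K L)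
    [MulSemiringAction (L ≃ₐ[K] L) (K' ⊗[K] L)]
    (hact : ∀ (σ : L ≃ₐ[K] L) (a : K') (b : L),
      σ • ((a : K') ⊗ₜ[K] b) = (a : K') ⊗ₜ[K] (σ b)) :
    Subsingleton
      (groupCohomology.H1
        (@Rep.ofMulDistribMulAction (L ≃ₐ[K] L) (K' ⊗[K] L)ˣ _
          (tensorUnitsCommGroup K L K')
          (unitsMulDistribMulAction (L ≃ₐ[K] L) (K' ⊗[K] L)))) := by

  letI : CommGroup (K' ⊗[K] L)ˣ := tensorUnitsCommGroup K L K'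
  letI : MulDistribMulAction (L ≃ₐ[K] L) (K' ⊗[K] L)ˣ :=
    unitsMulDistribMulAction (L ≃ₐ[K] L) (K' ⊗[K] L)
  refine subsingleton_of_forall_eq 0 fun y => ?_
  refine groupCohomology.H1_induction_on y fun x => (groupCohomology.H1π_eq_zero_iff _).2 ?_
  refine (@groupCohomology.coboundariesOfIsMulCoboundary₁ _ _ _ _
    (unitsMulDistribMulAction (L ≃ₐ[K] L) (K' ⊗[K] L)) _ ?_).2
  have hcoc := @groupCohomology.isMulCocycle₁_of_mem_cocycles₁ _ _ _ _
    (unitsMulDistribMulAction (L ≃ₐ[K] L) (K' ⊗[K] L)) _ x.2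
  set f : (L ≃ₐ[K] L) → (K' ⊗[K] L)ˣ := Additive.toMul ∘ ↑x with hfdef
  have hf : ∀ g h : L ≃ₐ[K] L, ((f (g * h) : K' ⊗[K] L)) =
      g • ((f h : K' ⊗[K] L)) * ((f g : K' ⊗[K] L)) := by
    intro g h
    have := congrArg Units.val (hcoc g h)
    exact this
  obtain ⟨u, hu⟩ := Stmt0Aux.exists_unit K L K' hact f hf
  refine ⟨u, fun g => Units.ext ?_⟩
  show ((g • u / u : (K' ⊗[K] L)ˣ) : K' ⊗[K] L) = (f g : K' ⊗[K] L)
  rw [div_eq_mul_inv, Units.val_mul]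
  have h1 : ((g • u : (K' ⊗[K] L)ˣ) : K' ⊗[K] L) = g • (u : K' ⊗[K] L) := rfl
  rw [h1, hu g]
  exact Units.mul_inv_cancel_right _ u
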